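/- A unit-speed curve α in a three-dimensional Lie group G with bi-invariant metric is a general helix if and only if its harmonic curvature function H = (τ - τ_G)/κ is constant; equivalently, if and only if τ = cκ + τ_G for some constant c. -/

import Mathlib

open Real
open scoped RealInnerProductSpace

/-- A unit-speed curve `α` in a three-dimensional Lie group `G` with bi-invariant
metric, together with its Frenet apparatus `(T, N, B, κ, τ)`.  Vector fields along
`α` are identified with curves in the Lie algebra `E` (with bracket `L`) via left
translation; `τ_G = (1/2)⟪[T,N], B⟫`, and the frame satisfies the (ordinary
derivative form of the) Frenet formulas. -/
structure FrenetLieCurve (E : Type*) [NormedAddCommGroup E] [InnerProductSpace ℝ E]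
    (L : E →ₗ[ℝ] E →ₗ[ℝ] E) where
  α : ℝ → E
  T : ℝ → E
  N : ℝ → E
  B : ℝ → E
  κ : ℝ → ℝ
  τ : ℝ → ℝ
  τG : ℝ → ℝ
  deriv_α : ∀ s, deriv α s = T s
  unit_T : ∀ s, ⟪T s, T s⟫ = 1
  unit_N : ∀ s, ⟪N s, N s⟫ = 1
  unit_B : ∀ s, ⟪B s, B s⟫ = 1
  orth_TN : ∀ s, ⟪T s, N s⟫ = 0
  orth_TB : ∀ s, ⟪T s, B s⟫ = 0
  orth_NB : ∀ s, ⟪N s, B s⟫ = 0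
  -- `(T,N,B)` is an orthonormal basis of the 3-dimensional Lie algebra at each `s`:
  basis_exp : ∀ (s : ℝ) (v : E),
    v = ⟪v, T s⟫ • T s + ⟪v, N s⟫ • N s + ⟪v, B s⟫ • B s
  kappa_pos : ∀ s, 0 < κ s
  tauG_def : ∀ s, τG s = (1 / 2) * ⟪L (T s) (N s), B s⟫
  frenet_T : ∀ s, deriv T s = κ s • N s
  frenet_N : ∀ s, deriv N s = -(κ s) • T s + (τ s - τG s) • B s
  frenet_B : ∀ s, deriv B s = (-(τ s - τG s)) • N s

variable {E : Type*} [NormedAddCommGroup E] [InnerProductSpace ℝ E]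
  {L : E →ₗ[ℝ] E →ₗ[ℝ] E}

/-- The harmonic curvature function `H = (τ - τ_G)/κ`. -/
noncomputable def FrenetLieCurve.H (F : FrenetLieCurve E L) : ℝ → ℝ :=
  fun s => (F.τ s - F.τG s) / F.κ s

/-- A curve is a general helix if its tangent makes a constant angle with a fixed
left-invariant unit vector field (a fixed unit element of the Lie algebra). -/
def IsGeneralHelix (F : FrenetLieCurve E L) : Prop :=
  ∃ u : E, ⟪u, u⟫ = 1 ∧ ∃ c : ℝ, ∀ s, ⟪F.T s, u⟫ = c

namespace FrenetLieCurve
variable (F : FrenetLieCurve E L)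

lemma hasDerivAt_T (s : ℝ) : HasDerivAt F.T (F.κ s • F.N s) s := by
  have hne : deriv F.T s ≠ 0 := by
    rw [F.frenet_T s]
    intro h
    rcases smul_eq_zero.mp h with h | h
    · exact (F.kappa_pos s).ne' h
    · have := F.unit_N s; rw [h] at this; simp at this
  have hd := differentiableAt_of_deriv_ne_zero hne
  have := hd.hasDerivAt
  rwa [F.frenet_T s] at this

lemma hasDerivAt_N (s : ℝ) : HasDerivAt F.N (-(F.κ s) • F.T s + (F.τ s - F.τG s) • F.B s) s := by
  have hne : deriv F.N s ≠ 0 := by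
    rw [F.frenet_N s]
    intro h
    have h2 : ⟪-(F.κ s) • F.T s + (F.τ s - F.τG s) • F.B s, F.T s⟫ = 0 := by rw [h]; simp
    rw [inner_add_left, real_inner_smul_left, real_inner_smul_left, F.unit_T s,
      real_inner_comm, F.orth_TB s] at h2
    simp at h2
    exact (F.kappa_pos s).ne' h2
  have hd := differentiableAt_of_deriv_ne_zero hne
  have := hd.hasDerivAt
  rwa [F.frenet_N s] at this

lemma hasDerivAt_B {s : ℝ} (h : F.τ s ≠ F.τG s) :
    HasDerivAt F.B ((-(F.τ s - F.τG s)) • F.N s) s := by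
  have hne : deriv F.B s ≠ 0 := by
    rw [F.frenet_B s]
    intro hz
    rcases smul_eq_zero.mp hz with h1 | h1
    · exact h (by linarith [sub_eq_zero.mp (neg_eq_zero.mp h1)])
    · have := F.unit_N s; rw [h1] at this; simp at this
  have hd := differentiableAt_of_deriv_ne_zero hne
  have := hd.hasDerivAt
  rwa [F.frenet_B s] at this

lemma sum_sq (u : E) (hu : ⟪u, u⟫ = 1) (s : ℝ) :
    ⟪F.T s, u⟫ ^ 2 + ⟪F.N s, u⟫ ^ 2 + ⟪F.B s, u⟫ ^ 2 = 1 := by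
  have h := F.basis_exp s u
  have h2 : ⟪u, u⟫ = ⟪u, T F s⟫ ^ 2 + ⟪u, N F s⟫ ^ 2 + ⟪u, B F s⟫ ^ 2 := by
    nth_rewrite 1 [h]
    rw [inner_add_left, inner_add_left, real_inner_smul_left, real_inner_smul_left,
      real_inner_smul_left, real_inner_comm u (F.T s), real_inner_comm u (F.N s),
      real_inner_comm u (F.B s)]
    ring
  rw [hu] at h2
  rw [real_inner_comm u (F.T s), real_inner_comm u (F.N s), real_inner_comm u (F.B s)]
  linarith

lemma hasDerivAt_inner_T (u : E) (s : ℝ) :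
    HasDerivAt (fun s => ⟪F.T s, u⟫) (F.κ s * ⟪F.N s, u⟫) s := by
  have h := HasDerivAt.inner ℝ (F.hasDerivAt_T s) (hasDerivAt_const s u)
  simpa [real_inner_smul_left] using h

lemma hasDerivAt_inner_N (u : E) (s : ℝ) :
    HasDerivAt (fun s => ⟪F.N s, u⟫)
      (-(F.κ s) * ⟪F.T s, u⟫ + (F.τ s - F.τG s) * ⟪F.B s, u⟫) s := by
  have h := HasDerivAt.inner ℝ (F.hasDerivAt_N s) (hasDerivAt_const s u)
  simpa [inner_add_left, real_inner_smul_left] using h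

lemma key : IsGeneralHelix F ↔ ∃ c : ℝ, ∀ s, F.τ s = c * F.κ s + F.τG s := by
  constructor
  · rintro ⟨u, hu, c, hc⟩
    have hcfun : (fun s => ⟪F.T s, u⟫) = fun _ => c := funext hc
    have hb : ∀ s, ⟪F.N s, u⟫ = 0 := by
      intro s
      have h1 := F.hasDerivAt_inner_T u s
      rw [hcfun] at h1
      have h2 := h1.unique (hasDerivAt_const s c)
      rcases mul_eq_zero.mp h2 with h | h
      · exact absurd h (F.kappa_pos s).ne'
      · exact h
    have hbfun : (fun s => ⟪F.N s, u⟫) = fun _ => (0 : ℝ) := funext hb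
    have hd : ∀ s, (F.τ s - F.τG s) * ⟪F.B s, u⟫ = F.κ s * c := by
      intro s
      have h1 := F.hasDerivAt_inner_N u s
      rw [hbfun] at h1
      have h2 := h1.unique (hasDerivAt_const s 0)
      rw [hc s] at h2
      linarith
    have hsum : ∀ s, c ^ 2 + ⟪F.B s, u⟫ ^ 2 = 1 := by
      intro s
      have := F.sum_sq u hu s
      rw [hc s, hb s] at this
      linarith [this]
    by_cases hc0 : c = 0
    · refine ⟨0, fun s => ?_⟩
      have h1 := hd s
      rw [hc0, mul_zero] at h1
      have h2 := hsum s
      rw [hc0] at h2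
      have hdne : ⟪F.B s, u⟫ ≠ 0 := by
        intro h; rw [h] at h2; norm_num at h2
      rcases mul_eq_zero.mp h1 with h | h
      · linarith [sub_eq_zero.mp h]
      · exact absurd h hdne
    · have hτ : ∀ s, F.τ s ≠ F.τG s := by
        intro s h
        have h1 := hd s
        rw [h, sub_self, zero_mul] at h1
        exact hc0 (by
          rcases mul_eq_zero.mp h1.symm with h2 | h2
          · exact absurd h2 (F.kappa_pos s).ne'
          · exact h2)
      have hBd : ∀ s, HasDerivAt (fun s => ⟪F.B s, u⟫) 0 s := by
        intro s
        have h := HasDerivAt.inner ℝ (F.hasDerivAt_B (hτ s)) (hasDerivAt_const s u)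
        simpa [real_inner_smul_left, hb s] using h
      have hconst : ∀ s, ⟪F.B s, u⟫ = ⟪F.B 0, u⟫ := fun s =>
        is_const_of_deriv_eq_zero (fun x => (hBd x).differentiableAt)
          (fun x => (hBd x).deriv) s 0
      have hd0 : ⟪F.B 0, u⟫ ≠ 0 := by
        intro h
        have h1 := hd 0
        rw [h, mul_zero] at h1
        rcases mul_eq_zero.mp h1.symm with h2 | h2
        · exact (F.kappa_pos 0).ne' h2
        · exact hc0 h2
      refine ⟨c / ⟪F.B 0, u⟫, fun s => ?_⟩
      have h1 := hd s
      rw [hconst s] at h1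
      field_simp
      linear_combination h1
  · rintro ⟨c, hc⟩
    by_cases hc0 : c = 0
    · refine ⟨F.B 0, F.unit_B 0, 0, fun s => ?_⟩
      have hττ : ∀ s, F.τ s - F.τG s = 0 := fun s => by rw [hc s, hc0]; ring
      set u := F.B 0 with hudef
      have hg : ∀ s, HasDerivAt (fun s => ⟪F.T s, u⟫ ^ 2 + ⟪F.N s, u⟫ ^ 2) 0 s := by
        intro s
        have h1 := (F.hasDerivAt_inner_T u s).pow 2
        have h2 := (F.hasDerivAt_inner_N u s).pow 2
        have h3 := h1.add h2
        refine HasDerivAt.congr_deriv (f := fun s => ⟪F.T s, u⟫ ^ 2 + ⟪F.N s, u⟫ ^ 2) h3 ?_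
        rw [hττ s]
        ring
      have hgconst : ∀ s, ⟪F.T s, u⟫ ^ 2 + ⟪F.N s, u⟫ ^ 2
          = ⟪F.T 0, u⟫ ^ 2 + ⟪F.N 0, u⟫ ^ 2 := fun s =>
        is_const_of_deriv_eq_zero (fun x => (hg x).differentiableAt)
          (fun x => (hg x).deriv) s 0
      have h0 : ⟪F.T s, u⟫ ^ 2 + ⟪F.N s, u⟫ ^ 2 = 0 := by
        rw [hgconst s, hudef, F.orth_TB 0, F.orth_NB 0]; ring
      have h1 : ⟪F.T s, u⟫ ^ 2 = 0 := by nlinarith [sq_nonneg ⟪F.N s, u⟫]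
      exact pow_eq_zero_iff two_ne_zero |>.mp h1
    · have hτ : ∀ s, F.τ s ≠ F.τG s := by
        intro s h
        have h1 := hc s
        rw [h] at h1
        have : c * F.κ s = 0 := by linarith
        rcases mul_eq_zero.mp this with h2 | h2
        · exact hc0 h2
        · exact (F.kappa_pos s).ne' h2
      have hf : ∀ s, HasDerivAt (fun s => c • F.T s + F.B s) 0 s := by
        intro s
        have h1 := (F.hasDerivAt_T s).const_smul c
        have h2 := F.hasDerivAt_B (hτ s)
        have h3 := h1.add h2
        refine HasDerivAt.congr_deriv (f := fun s => c • F.T s + F.B s) h3 ?_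
        rw [hc s, smul_smul]
        have : -(c * F.κ s + F.τG s - F.τG s) = -(c * F.κ s) := by ring
        rw [this, ← add_smul]
        simp
      have hcst : ∀ s, c • F.T s + F.B s = c • F.T 0 + F.B 0 := fun s =>
        is_const_of_deriv_eq_zero (fun x => (hf x).differentiableAt)
          (fun x => (hf x).deriv) s 0
      set w := c • F.T 0 + F.B 0 with hwdef
      have hpos : (0 : ℝ) < c ^ 2 + 1 := by positivity
      have hBT : ⟪F.B 0, F.T 0⟫ = 0 := by rw [real_inner_comm]; exact F.orth_TB 0
      have hww : ⟪w, w⟫ = c ^ 2 + 1 := by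
        rw [hwdef]
        simp only [inner_add_left, inner_add_right, real_inner_smul_left,
          real_inner_smul_right, F.unit_T 0, F.unit_B 0, F.orth_TB 0, hBT]
        ring
      have hsq : Real.sqrt (c ^ 2 + 1) ≠ 0 := by positivity
      refine ⟨(Real.sqrt (c ^ 2 + 1))⁻¹ • w, ?_, (Real.sqrt (c ^ 2 + 1))⁻¹ * c, fun s => ?_⟩
      · rw [real_inner_smul_left, real_inner_smul_right, hww]
        rw [← Real.sq_sqrt hpos.le]
        field_simp
        simp [Real.sq_sqrt hpos.le]
      · have hTw : ⟪F.T s, w⟫ = c := by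
          rw [← hcst s, inner_add_right, real_inner_smul_right, F.unit_T s, F.orth_TB s]
          ring
        rw [real_inner_smul_right, hTw]

end FrenetLieCurve

/-- A unit-speed curve in a three-dimensional Lie group with bi-invariant metric is a
general helix iff its harmonic curvature function `H = (τ - τ_G)/κ` is constant,
equivalently iff `τ = cκ + τ_G` for some constant `c`. -/
theorem general_helix_iff_harmonic_curvature_constant
    (hanti : ∀ x y : E, L x y = - L y x)
    (hjacobi : ∀ x y z : E, L (L x y) z + L (L y z) x + L (L z x) y = 0)
    (hbi : ∀ x y z : E, ⟪L x y, z⟫ + ⟪y, L x z⟫ = 0)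
    (F : FrenetLieCurve E L) :
    (IsGeneralHelix F ↔ ∃ c : ℝ, ∀ s, F.H s = c) ∧
    (IsGeneralHelix F ↔ ∃ c : ℝ, ∀ s, F.τ s = c * F.κ s + F.τG s) := by
  have hk := F.key
  refine ⟨?_, hk⟩
  rw [hk]
  constructor
  · rintro ⟨c, hc⟩
    refine ⟨c, fun s => ?_⟩
    unfold FrenetLieCurve.H
    rw [hc s]
    have h2 : c * F.κ s + F.τG s - F.τG s = c * F.κ s := by ring
    rw [h2, mul_div_assoc, div_self (F.kappa_pos s).ne', mul_one]
  · rintro ⟨c, hc⟩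
    refine ⟨c, fun s => ?_⟩
    have := hc s
    unfold FrenetLieCurve.H at this
    rw [div_eq_iff (F.kappa_pos s).ne'] at this
    linarith
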